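/- Let b = −25 and c = 0.04. There do not exist complex numbers V₄, V₅ with 0.9 ≤ |V₄| ≤ 1.1, 0.9 ≤ |V₅| ≤ 1.1 such that 0 = conj(i·b + i·c)·|V₄|² − conj(i·b)·V₄·conj(V₅) and 0 = conj(i·b + i·c)·|V₅|² − conj(i·b)·conj(V₄)·V₅. -/

import Mathlib

open Complex

theorem five_bus_line_infeasible :
    ¬ ∃ V₄ V₅ : ℂ,
      0.9 ≤ ‖V₄‖ ∧ ‖V₄‖ ≤ 1.1 ∧
      0.9 ≤ ‖V₅‖ ∧ ‖V₅‖ ≤ 1.1 ∧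
      0 = (starRingEnd ℂ) (I * ((-25 : ℝ) : ℂ) + I * ((0.04 : ℝ) : ℂ)) * ((‖V₄‖ : ℂ)) ^ 2
            - (starRingEnd ℂ) (I * ((-25 : ℝ) : ℂ)) * V₄ * (starRingEnd ℂ) V₅ ∧
      0 = (starRingEnd ℂ) (I * ((-25 : ℝ) : ℂ) + I * ((0.04 : ℝ) : ℂ)) * ((‖V₅‖ : ℂ)) ^ 2
            - (starRingEnd ℂ) (I * ((-25 : ℝ) : ℂ)) * (starRingEnd ℂ) V₄ * V₅ := by
  rintro ⟨V₄, V₅, h1, h2, h3, h4, e1, e2⟩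
  have hc : I * ((-25 : ℝ) : ℂ) + I * ((0.04 : ℝ) : ℂ) = ((-24.96 : ℝ) : ℂ) * I := by
    push_cast; norm_num [Complex.ext_iff]
  rw [hc] at e1 e2
  have E1 := congrArg norm (sub_eq_zero.mp e1.symm)
  have E2 := congrArg norm (sub_eq_zero.mp e2.symm)
  simp only [norm_mul, norm_pow, Complex.norm_conj, Complex.norm_real, Complex.norm_I,
    norm_norm, Real.norm_eq_abs, abs_norm] at E1 E2
  norm_num at E1 E2
  nlinarith [sq_nonneg (‖V₄‖ - ‖V₅‖), sq_nonneg (‖V₄‖ + ‖V₅‖), h1, h3]
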